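/- Let n, m be positive integers with 2m ≤ n, and let x_0, x_1, …, x_m ∈ ℂ^n be such that both x_0, …, x_{m−1} and x_1, …, x_m are linearly independent over ℂ. Let A : ℂ^n → ℂ^n be the linear map determined by A x_j = x_{j+1} for j = 0, …, m−1 and A u = 0 for every u orthogonal (with respect to the standard Hermitian inner product) to span(x_0, …, x_{m−1}). Suppose A has m distinct nonzero eigenvalues λ_1, …, λ_m with corresponding eigenvectors θ_1, …, θ_m. Then there exist unique a_1, …, a_m ∈ ℂ such that x_k = Σ_{j=1}^m λ_j^k · a_j · θ_j for all k = 1, …, m. -/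

import Mathlib

/-- For snapshots `x_0, …, x_m` (with `2m ≤ n`, and both `x_0, …, x_{m-1}`
and `x_1, …, x_m` linearly independent), let `A` be the linear map with `A x_j = x_{j+1}`
for `j < m` and `A u = 0` for every `u` orthogonal to `span(x_0, …, x_{m-1})`.
If `A` has `m` distinct nonzero eigenvalues `λ_j` with eigenvectors `θ_j`, then there are
unique amplitudes `a_j` with `x_k = Σ_j λ_j^k a_j θ_j` for `k = 1, …, m`. -/
theorem stmt_11 (n m : ℕ) (hn : 0 < n) (hm : 0 < m) (hmn : 2 * m ≤ n)
    (x : Fin (m + 1) → Fin n → ℂ)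
    (hli1 : LinearIndependent ℂ (fun j : Fin m => x j.castSucc))
    (hli2 : LinearIndependent ℂ (fun j : Fin m => x j.succ))
    (A : (Fin n → ℂ) →ₗ[ℂ] (Fin n → ℂ))
    (hA1 : ∀ j : Fin m, A (x j.castSucc) = x j.succ)
    (hA2 : ∀ u : Fin n → ℂ,
      (∀ j : Fin m, ∑ i, (starRingEnd ℂ) (x j.castSucc i) * u i = 0) → A u = 0)
    (lam : Fin m → ℂ) (hdist : Function.Injective lam) (hnz : ∀ j, lam j ≠ 0)
    (θ : Fin m → Fin n → ℂ) (hθnz : ∀ j, θ j ≠ 0)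
    (heig : ∀ j, A (θ j) = lam j • θ j) :
    ∃! a : Fin m → ℂ,
      ∀ k : Fin m, x k.succ = ∑ j, lam j ^ ((k : ℕ) + 1) • (a j • θ j) := by
  classical
  -- θ is linearly independent (eigenvectors with distinct eigenvalues)
  have hθli : LinearIndependent ℂ θ := by
    refine Module.End.eigenvectors_linearIndependent' (A : Module.End ℂ (Fin n → ℂ))
      lam hdist θ (fun j => ⟨?_, hθnz j⟩)
    exact Module.End.mem_eigenspace_iff.mpr (heig j)
  -- work in Euclidean space
  let S : Submodule ℂ (EuclideanSpace ℂ (Fin n)) :=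
    Submodule.span ℂ (Set.range fun j : Fin m => (WithLp.toLp 2 (x j.castSucc) : EuclideanSpace ℂ (Fin n)))
  let T : Submodule ℂ (Fin n → ℂ) := Submodule.span ℂ (Set.range fun j : Fin m => x j.succ)
  haveI : FiniteDimensional ℂ S := FiniteDimensional.span_of_finite ℂ (Set.finite_range _)
  -- every θ j lies in T
  have hST : ∀ v ∈ S, A v ∈ T := by
    intro v hv
    induction hv using Submodule.span_induction with
    | mem v hv =>
      obtain ⟨j', rfl⟩ := hv
      rw [WithLp.ofLp_toLp, hA1 j']
      exact Submodule.subset_span ⟨j', rfl⟩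
    | zero => simp
    | add u v _ _ hu hv => rw [WithLp.ofLp_add, map_add]; exact T.add_mem hu hv
    | smul c u _ hu => rw [WithLp.ofLp_smul, map_smul]; exact T.smul_mem c hu
  have hθT : ∀ j, θ j ∈ T := by
    intro j
    obtain ⟨p, hp, q, hq, hpq⟩ :=
      S.exists_add_mem_mem_orthogonal (WithLp.toLp 2 (θ j) : EuclideanSpace ℂ (Fin n))
    have hAq : A q = 0 := by
      refine hA2 q fun j' => ?_
      have h0 : @inner ℂ (EuclideanSpace ℂ (Fin n)) _ (WithLp.toLp 2 (x j'.castSucc)) q = 0 :=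
        (Submodule.mem_orthogonal S q).mp hq _ (Submodule.subset_span ⟨j', rfl⟩)
      simpa [PiLp.inner_apply, RCLike.inner_apply, mul_comm] using h0
    have hAp : A p ∈ T := hST p hp
    have hAθ : A (θ j) ∈ T := by
      have : A (θ j) = A p + A q := by rw [← map_add]; exact congrArg (fun v => A (WithLp.ofLp v)) hpq
      rw [this, hAq, add_zero]; exact hAp
    rw [heig j] at hAθ
    have := T.smul_mem (lam j)⁻¹ hAθ
    rwa [smul_smul, inv_mul_cancel₀ (hnz j), one_smul] at this
  -- span θ = T
  have hspan : Submodule.span ℂ (Set.range θ) = T := by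
    refine Submodule.eq_of_le_of_finrank_le ?_ ?_
    · rw [Submodule.span_le]; rintro _ ⟨j, rfl⟩; exact hθT j
    · rw [finrank_span_eq_card hθli, finrank_span_eq_card hli2]
  -- express x₁ in terms of θ
  have hx1 : x (⟨0, hm⟩ : Fin m).succ ∈ Submodule.span ℂ (Set.range θ) := by
    rw [hspan]; exact Submodule.subset_span ⟨⟨0, hm⟩, rfl⟩
  obtain ⟨c, hc⟩ := (Submodule.mem_span_range_iff_exists_fun ℂ).mp hx1
  -- inductive reconstruction
  have key : ∀ k : ℕ, ∀ hk : k < m,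
      x ⟨k + 1, Nat.succ_lt_succ hk⟩ = ∑ j, (lam j ^ k * c j) • θ j := by
    intro k
    induction k with
    | zero =>
      intro hk
      simpa using hc.symm
    | succ k ih =>
      intro hk
      have hk' : k < m := Nat.lt_of_succ_lt hk
      have h1 : A (x (⟨k + 1, hk⟩ : Fin m).castSucc) = x (⟨k + 1, hk⟩ : Fin m).succ :=
        hA1 ⟨k + 1, hk⟩
      have h2 : (⟨k + 1, hk⟩ : Fin m).castSucc = ⟨k + 1, Nat.succ_lt_succ hk'⟩ := rfl
      have h3 : (⟨k + 1, hk⟩ : Fin m).succ = ⟨k + 2, Nat.succ_lt_succ hk⟩ := rfl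
      rw [h2, h3, ih hk'] at h1
      rw [← h1, map_sum]
      refine Finset.sum_congr rfl fun j _ => ?_
      rw [map_smul, heig j, smul_smul]
      ring_nf
  refine ⟨fun j => c j / lam j, ?_, ?_⟩
  · intro k
    have hk := k.isLt
    have : x k.succ = x ⟨(k : ℕ) + 1, Nat.succ_lt_succ hk⟩ := rfl
    rw [this, key (k : ℕ) hk]
    refine Finset.sum_congr rfl fun j _ => ?_
    rw [smul_smul]
    congr 1
    field_simp [hnz j]
    ring
  · intro b hb
    funext j
    have h1 := hb ⟨0, hm⟩
    have h2 : x (⟨0, hm⟩ : Fin m).succ = ∑ j, (lam j ^ 1 • ((c j / lam j) • θ j)) := by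
      rw [show x (⟨0, hm⟩ : Fin m).succ = x ⟨0 + 1, Nat.succ_lt_succ hm⟩ from rfl, key 0 hm]
      refine Finset.sum_congr rfl fun j _ => ?_
      rw [smul_smul]
      congr 1
      field_simp [hnz j]
    have h3 : ∑ j, (lam j * b j - lam j * (c j / lam j)) • θ j = 0 := by
      have := h1.symm.trans h2
      rw [← sub_eq_zero] at this
      rw [← this, ← Finset.sum_sub_distrib]
      refine Finset.sum_congr rfl fun j _ => ?_
      simp [sub_smul, smul_smul, pow_one]
    have h4 := Fintype.linearIndependent_iff.mp hθli _ h3 j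
    have h5 : lam j * b j = lam j * (c j / lam j) := by linear_combination h4
    exact mul_left_cancel₀ (hnz j) h5
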